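/- Suppose the observed block average satisfies L = (2/m')·Σ_{k=1}^{m'/2} B_k ≥ δ, and the Azuma bound Pr[|L − L̄| ≥ δ/2] ≤ 2·exp(−m'·δ²/16) holds, where L̄ is the average of the conditional means and each conditional mean M̄_k ≤ 1/2. Then with probability at least 1 − 2·exp(−m'·δ²/16), at least m'δ/(2(2−δ)) of the m'/2 rounds satisfy M̄_k ≥ δ/4. -/

import Mathlib

open MeasureTheory Finset in
/-- Combining the Azuma estimation lemma with the counting lemma: if the observed block
average satisfies `L ≥ δ`, the Azuma bound `Pr[|L - L̄| ≥ δ/2] ≤ 2 exp(-m' δ²/16)` holds,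
and every conditional mean `M̄ k ≤ 1/2`, then with probability at least
`1 - 2 exp(-m' δ²/16)` at least `m'δ/(2(2-δ))` of the `m'/2` rounds satisfy
`M̄ k ≥ δ/4`. -/
theorem azuma_counting_combined {Ω : Type} {mΩ : MeasurableSpace Ω} (μ : Measure Ω)
    [IsProbabilityMeasure μ] (m' n : ℕ) (hn : 0 < n) (hm' : m' = 2 * n)
    (δ : ℝ) (hδ : 0 < δ ∧ δ < 1)
    (B Mbar : Fin n → Ω → ℝ)
    (hB : ∀ k ω, B k ω ∈ Set.Icc (0 : ℝ) 1)
    (hMbar : ∀ k ω, Mbar k ω ≤ 1 / 2)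
    (L Lbar : Ω → ℝ)
    (hL : ∀ ω, L ω = (2 / (m' : ℝ)) * ∑ k, B k ω)
    (hLbar : ∀ ω, Lbar ω = (2 / (m' : ℝ)) * ∑ k, Mbar k ω)
    (hobs : ∀ ω, δ ≤ L ω)
    (hAzuma : μ {ω | δ / 2 ≤ |L ω - Lbar ω|} ≤
      ENNReal.ofReal (2 * Real.exp (-(m' : ℝ) * δ ^ 2 / 16))) :
    1 - ENNReal.ofReal (2 * Real.exp (-(m' : ℝ) * δ ^ 2 / 16)) ≤
      μ {ω | (m' : ℝ) * δ / (2 * (2 - δ)) ≤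
        ((Finset.univ.filter fun k : Fin n => δ / 4 ≤ Mbar k ω).card : ℝ)} := by
  obtain ⟨hδ0, hδ1⟩ := hδ
  set bad : Set Ω := {ω | δ / 2 ≤ |L ω - Lbar ω|} with hbad
  have hsub : badᶜ ⊆ {ω | (m' : ℝ) * δ / (2 * (2 - δ)) ≤
      ((Finset.univ.filter fun k : Fin n => δ / 4 ≤ Mbar k ω).card : ℝ)} := by
    intro ω hω
    simp only [hbad, Set.mem_compl_iff, Set.mem_setOf_eq, not_le] at hω
    have habs : L ω - Lbar ω < δ / 2 := (abs_lt.mp hω).2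
    have hLbar2 : δ / 2 < Lbar ω := by
      have := hobs ω
      linarith
    have hm'pos : (0 : ℝ) < (m' : ℝ) := by
      have : 0 < m' := by omega
      exact_mod_cast this
    have hsum : (m' : ℝ) * δ / 4 < ∑ k, Mbar k ω := by
      rw [hLbar ω] at hLbar2
      rw [div_mul_eq_mul_div, lt_div_iff₀ hm'pos] at hLbar2
      linarith
    set S := Finset.univ.filter fun k : Fin n => δ / 4 ≤ Mbar k ω with hS
    set c := S.card with hc
    have hsumle : ∑ k, Mbar k ω ≤ (c : ℝ) * (1 / 2) + ((n : ℝ) - c) * (δ / 4) := by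
      rw [← Finset.sum_filter_add_sum_filter_not Finset.univ
        (fun k : Fin n => δ / 4 ≤ Mbar k ω)]
      have h1 : ∑ k ∈ S, Mbar k ω ≤ (c : ℝ) * (1 / 2) := by
        calc ∑ k ∈ S, Mbar k ω ≤ ∑ k ∈ S, (1 / 2 : ℝ) :=
              Finset.sum_le_sum fun k _ => hMbar k ω
          _ = (c : ℝ) * (1 / 2) := by simp [mul_comm, hc]
      have h2 : ∑ k ∈ Finset.univ.filter (fun k : Fin n => ¬ (δ / 4 ≤ Mbar k ω)),
          Mbar k ω ≤ ((n : ℝ) - c) * (δ / 4) := by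
        have hcard : ((Finset.univ.filter
            (fun k : Fin n => ¬ (δ / 4 ≤ Mbar k ω))).card : ℝ) = (n : ℝ) - c := by
          have hnat := Finset.card_filter_add_card_filter_not
            (s := (Finset.univ : Finset (Fin n)))
            (p := fun k : Fin n => δ / 4 ≤ Mbar k ω)
          simp only [Finset.card_univ, Fintype.card_fin] at hnat
          have hcast := congrArg (fun x : ℕ => (x : ℝ)) hnat
          push_cast at hcast
          rw [hc, hS]
          linarith
        calc ∑ k ∈ Finset.univ.filter (fun k : Fin n => ¬ (δ / 4 ≤ Mbar k ω)), Mbar k ω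
            ≤ ∑ k ∈ Finset.univ.filter (fun k : Fin n => ¬ (δ / 4 ≤ Mbar k ω)),
              (δ / 4 : ℝ) := by
              refine Finset.sum_le_sum fun k hk => ?_
              have := (Finset.mem_filter.mp hk).2
              linarith
          _ = ((n : ℝ) - c) * (δ / 4) := by
              rw [Finset.sum_const, nsmul_eq_mul, hcard]
      linarith
    show (m' : ℝ) * δ / (2 * (2 - δ)) ≤ (c : ℝ)
    have hmn : (m' : ℝ) = 2 * n := by exact_mod_cast hm'
    rw [hmn] at hsum ⊢
    rw [div_le_iff₀ (by nlinarith : (0:ℝ) < 2 * (2 - δ))]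
    nlinarith
  refine le_trans ?_ (measure_mono hsub)
  calc 1 - ENNReal.ofReal (2 * Real.exp (-(m' : ℝ) * δ ^ 2 / 16))
      ≤ 1 - μ bad := tsub_le_tsub_left hAzuma 1
    _ ≤ μ badᶜ := by
        rw [tsub_le_iff_right]
        calc (1 : ENNReal) = μ Set.univ := (measure_univ (μ := μ)).symm
          _ = μ (badᶜ ∪ bad) := by rw [Set.compl_union_self]
          _ ≤ μ badᶜ + μ bad := measure_union_le _ _
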